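/- For words u and v over a finite alphabet A and an integer k ≥ 1, u and v are k-abelian equivalent (i.e., |u|_x = |v|_x for every word x of length at most k) if and only if either (a) |u| < k or |v| < k and u = v, or (b) |u|, |v| ≥ k, u and v have the same number of occurrences of every length-k factor, and the length-(k−1) prefixes and the length-(k−1) suffixes of u and v are equal. -/

import Mathlib

/-- Number of (possibly overlapping) occurrences of `w` as a factor of `u`. -/
def countOcc {A : Type*} [DecidableEq A] (u w : List A) : ℕ :=
  (List.range (u.length + 1 - w.length)).countP
    (fun i => decide ((u.drop i).take w.length = w))

/-- `k`-abelian equivalence: equal occurrence counts for all words of length between 1 and `k`. -/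
def kAbEq {A : Type*} [DecidableEq A] (k : ℕ) (u v : List A) : Prop :=
  ∀ w : List A, 1 ≤ w.length → w.length ≤ k → countOcc u w = countOcc v w

/-- The length-`n` factor of the sequence `x` starting at position `i`. -/
def factorAt {A : Type*} (x : ℕ → A) (i n : ℕ) : List A :=
  (List.range n).map (fun j => x (i + j))

/-- The set of length-`n` factors of the sequence `x`. -/
def Fac {A : Type*} (x : ℕ → A) (n : ℕ) : Set (List A) :=
  {u | ∃ i, u = factorAt x i n}

/-- `u` is a factor of the sequence `x`. -/
def IsFactor {A : Type*} (x : ℕ → A) (u : List A) : Prop :=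
  ∃ i, u = factorAt x i u.length

/-- The complete invariant of `k`-abelian equivalence: all counts of factors of
length between `1` and `k`. -/
def kProfile {A : Type*} [DecidableEq A] (k : ℕ) (u : List A) : List A → ℕ :=
  fun w => if 1 ≤ w.length ∧ w.length ≤ k then countOcc u w else 0

/-- The complete invariant of exact `k`-abelian equivalence (for same-length words):
all counts of factors of length exactly `k`. -/
def exProfile {A : Type*} [DecidableEq A] (k : ℕ) (u : List A) : List A → ℕ :=
  fun w => if w.length = k then countOcc u w else 0

/-- The `k`-abelian complexity: number of length-`n` factors of `x` up to `k`-abelian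
equivalence. -/
noncomputable def kAbComplexity {A : Type*} [DecidableEq A] (x : ℕ → A) (k n : ℕ) : ℕ :=
  Set.ncard (kProfile k '' Fac x n)

/-- The exact `k`-abelian complexity: number of length-`n` factors of `x` up to exact
`k`-abelian equivalence. -/
noncomputable def exAbComplexity {A : Type*} [DecidableEq A] (x : ℕ → A) (k n : ℕ) : ℕ :=
  Set.ncard (exProfile k '' Fac x n)

/-- The abelian complexity: number of Parikh vectors of length-`n` factors of `x`. -/
noncomputable def abComplexity {A : Type*} [DecidableEq A] (x : ℕ → A) (n : ℕ) : ℕ :=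
  Set.ncard ((fun (u : List A) (a : A) => u.count a) '' Fac x n)

/-- The factor complexity of `x`. -/
noncomputable def factorComplexity {A : Type*} (x : ℕ → A) (n : ℕ) : ℕ :=
  Set.ncard (Fac x n)

section KAbHelpers
set_option linter.unusedSectionVars false
variable {A : Type*} [DecidableEq A]

def occs (u w : List A) : Finset ℕ :=
  (Finset.range (u.length + 1 - w.length)).filter
    (fun i => (u.drop i).take w.length = w)

lemma countOcc_occs (u w : List A) : countOcc u w = (occs u w).card := by
  simp [countOcc, occs, List.countP_eq_length_filter, Finset.filter, Finset.range, Multiset.range, Finset.card]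

lemma mem_occs {u w : List A} {i : ℕ} :
    i ∈ occs u w ↔ i + w.length ≤ u.length ∧ (u.drop i).take w.length = w := by
  simp only [occs, Finset.mem_filter, Finset.mem_range]
  constructor <;> rintro ⟨h1, h2⟩ <;> exact ⟨by omega, h2⟩

lemma rev_slice (u : List A) (i m : ℕ) (h : i + m ≤ u.length) :
    (u.reverse.drop (u.length - m - i)).take m = ((u.drop i).take m).reverse := by
  rw [List.reverse_take, List.reverse_drop, List.length_drop, List.take_drop]
  have h1 : u.length - m - i = u.length - i - m := by omega
  have h2 : u.length - i - m + m = u.length - i := by omega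
  rw [h1, h2]

lemma countOcc_reverse (u w : List A) :
    countOcc u.reverse w.reverse = countOcc u w := by
  rw [countOcc_occs, countOcc_occs]
  refine (Finset.card_nbij' (fun j => u.length - w.length - j)
    (fun i => u.length - w.length - i) ?_ ?_ ?_ ?_).symm
  · intro i hi
    rw [Finset.mem_coe, mem_occs] at hi
    obtain ⟨h1, h2⟩ := hi
    dsimp only
    rw [Finset.mem_coe, mem_occs, List.length_reverse, List.length_reverse]
    refine ⟨by omega, ?_⟩
    rw [rev_slice u i w.length h1, h2]
  · intro j hj
    rw [Finset.mem_coe, mem_occs, List.length_reverse, List.length_reverse] at hj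
    obtain ⟨h1, h2⟩ := hj
    dsimp only
    rw [Finset.mem_coe, mem_occs]
    refine ⟨by omega, ?_⟩
    have := rev_slice u.reverse j w.length (by rwa [List.length_reverse])
    rw [List.reverse_reverse, List.length_reverse] at this
    rw [h2] at this
    rw [this, List.reverse_reverse]
  · intro i hi
    rw [Finset.mem_coe, mem_occs] at hi
    dsimp only
    omega
  · intro j hj
    rw [Finset.mem_coe, mem_occs, List.length_reverse, List.length_reverse] at hj
    dsimp only
    omega

lemma occ_cons {u p : List A} {a : A} {j : ℕ} (h : j < u.length) :
    (u.drop j).take (p.length + 1) = a :: p ↔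
      u[j] = a ∧ (u.drop (j + 1)).take p.length = p := by
  rw [List.drop_eq_getElem_cons h, List.take_succ_cons]
  constructor
  · intro h2; injection h2 with h3 h4; exact ⟨h3, h4⟩
  · rintro ⟨h3, h4⟩; rw [h3, h4]

lemma prefix_split (u p : List A) (T : Finset A) (hT : ∀ a ∈ u, a ∈ T) :
    countOcc u p = (if p <+: u then 1 else 0) + ∑ a ∈ T, countOcc u (a :: p) := by
  rw [countOcc_occs]
  have hsplit := Finset.card_filter_add_card_filter_not
    (s := occs u p) (p := fun i => i = 0)
  have h0 : ((occs u p).filter (fun i => i = 0)).card = if p <+: u then 1 else 0 := by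
    by_cases hp : p <+: u
    · rw [if_pos hp]
      have : (occs u p).filter (fun i => i = 0) = {0} := by
        ext i
        simp only [Finset.mem_filter, Finset.mem_singleton, mem_occs]
        constructor
        · rintro ⟨_, h2⟩; exact h2
        · rintro rfl
          refine ⟨⟨by simpa using hp.length_le, ?_⟩, rfl⟩
          simpa using (List.prefix_iff_eq_take.mp hp).symm
      rw [this, Finset.card_singleton]
    · rw [if_neg hp]
      rw [Finset.card_eq_zero]
      ext i
      simp only [Finset.mem_filter, mem_occs, Finset.notMem_empty, iff_false]
      rintro ⟨⟨h1, h2⟩, rfl⟩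
      exact hp (List.prefix_iff_eq_take.mpr (by simpa using h2.symm))
  have h1 : ((occs u p).filter (fun i => ¬ i = 0)).card
      = ∑ a ∈ T, countOcc u (a :: p) := by
    have heq : (occs u p).filter (fun i => ¬ i = 0)
        = T.biUnion (fun a => (occs u (a :: p)).image (· + 1)) := by
      ext i
      simp only [Finset.mem_filter, Finset.mem_biUnion, Finset.mem_image, mem_occs,
        List.length_cons]
      constructor
      · rintro ⟨⟨hle, hmatch⟩, hne⟩
        obtain ⟨j, rfl⟩ : ∃ j, i = j + 1 := ⟨i - 1, by omega⟩
        have hj : j < u.length := by omega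
        refine ⟨u[j], hT _ (List.getElem_mem hj), j, ⟨by omega, ?_⟩, rfl⟩
        exact (occ_cons hj).mpr ⟨rfl, hmatch⟩
      · rintro ⟨a, _, j, ⟨hle, hmatch⟩, rfl⟩
        have hj : j < u.length := by omega
        obtain ⟨_, h4⟩ := (occ_cons hj).mp hmatch
        exact ⟨⟨by omega, h4⟩, by omega⟩
    rw [heq, Finset.card_biUnion]
    · refine Finset.sum_congr rfl fun a _ => ?_
      rw [Finset.card_image_of_injective _ (add_left_injective 1), countOcc_occs]
    · intro a _ b _ hab
      simp only [Finset.disjoint_left, Finset.mem_image]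
      rintro i hmem1 hmem2
      obtain ⟨j, hj, rfl⟩ := hmem1
      obtain ⟨j', hj', hjj⟩ := hmem2
      have hje : j' = j := by omega
      rw [hje] at hj'
      rw [mem_occs, List.length_cons] at hj hj'
      have hjl : j < u.length := by omega
      obtain ⟨ha, -⟩ := (occ_cons hjl).mp hj.2
      obtain ⟨hb, -⟩ := (occ_cons hjl).mp hj'.2
      exact hab (ha ▸ hb ▸ rfl)
  omega

lemma count_split (u w : List A) (n : ℕ) (hn1 : 1 ≤ n) (hw : w.length ≤ n) (Z : Finset (List A))
    (hZ1 : ∀ z ∈ Z, z.length = n ∧ w <+: z)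
    (hZ2 : ∀ i, i + n ≤ u.length → w <+: (u.drop i).take n → (u.drop i).take n ∈ Z) :
    countOcc u w = (∑ z ∈ Z, countOcc u z) + countOcc (u.drop (u.length - (n - 1))) w := by
  set d := u.length - (n - 1) with hd
  rw [countOcc_occs]
  have hsplit := Finset.card_filter_add_card_filter_not
    (s := occs u w) (p := fun i => i + n ≤ u.length)
  have h1 : ((occs u w).filter (fun i => i + n ≤ u.length)).card
      = ∑ z ∈ Z, countOcc u z := by
    have heq : (occs u w).filter (fun i => i + n ≤ u.length)
        = Z.biUnion (fun z => occs u z) := by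
      ext i
      simp only [Finset.mem_filter, Finset.mem_biUnion, mem_occs]
      constructor
      · rintro ⟨⟨hle, hmatch⟩, hn⟩
        have hlen : ((u.drop i).take n).length = n := by
          rw [List.length_take, List.length_drop]; omega
        have hpre : w <+: (u.drop i).take n := by
          rw [List.prefix_iff_eq_take, List.take_take, min_eq_left hw, hmatch]
        refine ⟨(u.drop i).take n, hZ2 i hn hpre, ?_, ?_⟩
        · rw [hlen]; omega
        · rw [hlen]
      · rintro ⟨z, hz, hle, hmatch⟩
        obtain ⟨hzlen, hzpre⟩ := hZ1 z hz
        rw [hzlen] at hle hmatch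
        refine ⟨⟨by omega, ?_⟩, by omega⟩
        rw [← hmatch] at hzpre
        have h5 := List.prefix_iff_eq_take.mp hzpre
        rw [List.take_take, min_eq_left hw] at h5
        exact h5.symm
    rw [heq, Finset.card_biUnion]
    · exact Finset.sum_congr rfl fun z _ => (countOcc_occs u z).symm
    · intro z1 hz1 z2 hz2 hne
      simp only [Finset.disjoint_left]
      intro i hi1 hi2
      rw [mem_occs] at hi1 hi2
      obtain ⟨hl1, hm1⟩ := hi1
      obtain ⟨hl2, hm2⟩ := hi2
      exact hne (by rw [← hm1, ← hm2, (hZ1 z1 hz1).1, (hZ1 z2 hz2).1])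
  have h2 : ((occs u w).filter (fun i => ¬ i + n ≤ u.length)).card
      = countOcc (u.drop d) w := by
    have heq : (occs u w).filter (fun i => ¬ i + n ≤ u.length)
        = (occs (u.drop d) w).image (· + d) := by
      ext i
      simp only [Finset.mem_filter, Finset.mem_image, mem_occs, List.length_drop]
      constructor
      · rintro ⟨⟨hle, hmatch⟩, hn⟩
        refine ⟨i - d, ⟨by omega, ?_⟩, by omega⟩
        rw [List.drop_drop]
        have h6 : d + (i - d) = i := by omega
        rw [h6, hmatch]
      · rintro ⟨j, ⟨hle, hmatch⟩, rfl⟩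
        rw [List.drop_drop, Nat.add_comm d j] at hmatch
        exact ⟨⟨by omega, hmatch⟩, by omega⟩
    rw [heq, Finset.card_image_of_injective _ (add_left_injective d), countOcc_occs]
  omega

lemma one_le_countOcc (u : List A) (i m : ℕ) (h : i + m ≤ u.length) :
    1 ≤ countOcc u ((u.drop i).take m) := by
  have hlen : ((u.drop i).take m).length = m := by
    rw [List.length_take, List.length_drop]; omega
  rw [countOcc_occs, Nat.one_le_iff_ne_zero, ← Nat.pos_iff_ne_zero, Finset.card_pos]
  exact ⟨i, mem_occs.mpr ⟨by rw [hlen]; omega, by rw [hlen]⟩⟩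

lemma length_le_of_countOcc_pos {u w : List A} (h : 1 ≤ countOcc u w) :
    w.length ≤ u.length := by
  rw [countOcc_occs, Nat.one_le_iff_ne_zero, ← Nat.pos_iff_ne_zero, Finset.card_pos] at h
  obtain ⟨i, hi⟩ := h
  have := (mem_occs.mp hi).1
  omega

lemma countOcc_eq_zero_of_long {u w : List A} (h : u.length < w.length) :
    countOcc u w = 0 := by
  have h0 : u.length + 1 - w.length = 0 := by omega
  rw [countOcc_occs]
  simp [occs, h0]

lemma le_of_kAbEq_short {k : ℕ} {u v : List A} (hk : 1 ≤ k)
    (h : kAbEq k u v) (hu : u.length < k) : v.length ≤ u.length := by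
  by_contra hlt
  push_neg at hlt
  set m := min (u.length + 1) k with hm
  have hlen : (v.take m).length = m := by rw [List.length_take]; omega
  have h0 : 1 ≤ countOcc v (v.take m) := by
    have := one_le_countOcc v 0 m (by omega)
    rwa [List.drop_zero] at this
  have h3 := h (v.take m) (by omega) (by omega)
  have hz : countOcc u (v.take m) = 0 := countOcc_eq_zero_of_long (by omega)
  omega

lemma eq_of_kAbEq_short {k : ℕ} {u v : List A} (hk : 1 ≤ k)
    (h : kAbEq k u v) (hu : u.length < k) : u = v := by
  have hvu := le_of_kAbEq_short hk h hu
  have huv := le_of_kAbEq_short hk (fun w a b => (h w a b).symm) (by omega)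
  rcases List.eq_nil_or_concat u with rfl | hne
  · have : v.length = 0 := by simpa using hvu
    exact (List.eq_nil_of_length_eq_zero this).symm
  · have hupos : 0 < u.length := by
      obtain ⟨l, a, rfl⟩ := hne; simp
    have h1 : 1 ≤ countOcc u u := by
      have := one_le_countOcc u 0 u.length (by omega)
      rwa [List.drop_zero, List.take_length] at this
    have h2 : 1 ≤ countOcc v u := by
      rw [← h u (by omega) (by omega)]; exact h1
    rw [countOcc_occs, Nat.one_le_iff_ne_zero, ← Nat.pos_iff_ne_zero,
      Finset.card_pos] at h2
    obtain ⟨i, hi⟩ := h2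
    obtain ⟨hile, himatch⟩ := mem_occs.mp hi
    have hi0 : i = 0 := by omega
    subst hi0
    rw [List.drop_zero] at himatch
    have hlen : u.length = v.length := by omega
    rw [hlen, List.take_length] at himatch
    exact himatch.symm

lemma kAbEq_reverse' {k : ℕ} {u v : List A} (h : kAbEq k u v) :
    kAbEq k u.reverse v.reverse := by
  intro w h1 h2
  have hu := countOcc_reverse u w.reverse
  have hv := countOcc_reverse v w.reverse
  rw [List.reverse_reverse] at hu hv
  rw [hu, hv]
  exact h w.reverse (by simpa using h1) (by simpa using h2)

lemma prefix_eq_of_kAbEq {k : ℕ} {u v : List A} (hk : 1 ≤ k) (h : kAbEq k u v)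
    (hu : k ≤ u.length) (hv : k ≤ v.length) : u.take (k - 1) = v.take (k - 1) := by
  rcases Nat.eq_or_lt_of_le hk with h1 | h2
  · rw [← h1]; simp
  · set p := u.take (k - 1) with hp
    have hplen : p.length = k - 1 := by rw [hp, List.length_take]; omega
    set T := (u ++ v).toFinset with hT
    have e1 := prefix_split u p T (fun a ha => by
      rw [hT, List.mem_toFinset, List.mem_append]; exact Or.inl ha)
    have e2 := prefix_split v p T (fun a ha => by
      rw [hT, List.mem_toFinset, List.mem_append]; exact Or.inr ha)
    have hc : countOcc u p = countOcc v p := h p (by omega) (by omega)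
    have hsum : ∑ a ∈ T, countOcc u (a :: p) = ∑ a ∈ T, countOcc v (a :: p) :=
      Finset.sum_congr rfl fun a _ => h (a :: p) (by simp) (by simp [hplen]; omega)
    have hind : (if p <+: u then 1 else 0) = (if p <+: v then 1 else 0) := by omega
    have hpu : p <+: u := List.take_prefix _ _
    rw [if_pos hpu] at hind
    have hpv : p <+: v := by
      by_contra hc2
      rw [if_neg hc2] at hind
      omega
    have := List.prefix_iff_eq_take.mp hpv
    rw [hplen] at this
    exact this

lemma suffix_eq_of_kAbEq {k : ℕ} {u v : List A} (hk : 1 ≤ k) (h : kAbEq k u v)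
    (hu : k ≤ u.length) (hv : k ≤ v.length) :
    u.drop (u.length - (k - 1)) = v.drop (v.length - (k - 1)) := by
  have hrev := prefix_eq_of_kAbEq hk (kAbEq_reverse' h)
    (by simpa using hu) (by simpa using hv)
  have h1 : (u.drop (u.length - (k - 1))).reverse = u.reverse.take (k - 1) := by
    rw [List.reverse_drop]
    congr 1
    omega
  have h2 : (v.drop (v.length - (k - 1))).reverse = v.reverse.take (k - 1) := by
    rw [List.reverse_drop]
    congr 1
    omega
  apply List.reverse_injective
  rw [h1, h2, hrev]


end KAbHelpers

/-- Characterization of `k`-abelian equivalence (Lemma 2.3(1) of Karhumäki et al.). -/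
theorem kAbEq_iff_short_or_exact_and_borders {A : Type*} [DecidableEq A]
    (k : ℕ) (hk : 1 ≤ k) (u v : List A) :
    kAbEq k u v ↔
      (((u.length < k ∨ v.length < k) ∧ u = v) ∨
        (k ≤ u.length ∧ k ≤ v.length ∧
          (∀ w : List A, w.length = k → countOcc u w = countOcc v w) ∧
          u.take (k - 1) = v.take (k - 1) ∧
          u.drop (u.length - (k - 1)) = v.drop (v.length - (k - 1)))) := by
  constructor
  · intro h
    by_cases hu : u.length < k
    · exact Or.inl ⟨Or.inl hu, eq_of_kAbEq_short hk h hu⟩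
    · by_cases hv : v.length < k
      · exact Or.inl ⟨Or.inr hv,
          (eq_of_kAbEq_short hk (fun w a b => (h w a b).symm) hv).symm⟩
      · push_neg at hu hv
        exact Or.inr ⟨hu, hv, fun w hw => h w (by omega) (le_of_eq hw),
          prefix_eq_of_kAbEq hk h hu hv, suffix_eq_of_kAbEq hk h hu hv⟩
  · rintro (⟨_, rfl⟩ | ⟨hu, hv, hexact, hpre, hsuf⟩)
    · intro w _ _; rfl
    · intro w h1 h2
      classical
      set Z : Finset (List A) :=
        (((List.range u.length).map (fun i => (u.drop i).take k) ++
          (List.range v.length).map (fun i => (v.drop i).take k)).toFinset).filter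
          (fun z => z.length = k ∧ w <+: z) with hZ
      have hZ1 : ∀ z ∈ Z, z.length = k ∧ w <+: z := by
        intro z hz
        rw [hZ, Finset.mem_filter] at hz
        exact hz.2
      have hZ2u : ∀ i, i + k ≤ u.length → w <+: (u.drop i).take k →
          (u.drop i).take k ∈ Z := by
        intro i hik hpre2
        rw [hZ, Finset.mem_filter]
        refine ⟨?_, ?_, hpre2⟩
        · rw [List.mem_toFinset, List.mem_append]
          exact Or.inl (List.mem_map.mpr ⟨i, List.mem_range.mpr (by omega), rfl⟩)
        · rw [List.length_take, List.length_drop]; omega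
      have hZ2v : ∀ i, i + k ≤ v.length → w <+: (v.drop i).take k →
          (v.drop i).take k ∈ Z := by
        intro i hik hpre2
        rw [hZ, Finset.mem_filter]
        refine ⟨?_, ?_, hpre2⟩
        · rw [List.mem_toFinset, List.mem_append]
          exact Or.inr (List.mem_map.mpr ⟨i, List.mem_range.mpr (by omega), rfl⟩)
        · rw [List.length_take, List.length_drop]; omega
      have e1 := count_split u w k hk h2 Z hZ1 hZ2u
      have e2 := count_split v w k hk h2 Z hZ1 hZ2v
      rw [e1, e2, hsuf]
      congr 1
      exact Finset.sum_congr rfl fun z hz => hexact z (hZ1 z hz).1
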